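/- If a function y : [0,∞) → H (H a Hilbert space) satisfies: (i) for all 0 ≤ s ≤ t, |‖y(t)‖² − ‖y(s)‖²| ≤ M·(∫_s^t ‖y(r)‖_V² dr)^{1/2} for some constant M > 0 and some norm ‖·‖_V, and (ii) ∫_0^∞ ‖y(r)‖_V² dr < ∞, then ‖y(t)‖ → 0 as t → ∞. -/

import Mathlib

open MeasureTheory Filter Set

/-- If `|‖y(t)‖² − ‖y(s)‖²| ≤ M (∫_s^t ‖y‖_V²)^{1/2}` with `g = ‖y‖_V²` integrable on `[0,∞)`
(and the `V`-norm dominates the `H`-norm, as in the Gelfand triple `V ⊂ H`),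
then `‖y(t)‖_H → 0` as `t → ∞`. -/
theorem stmt0
    {H : Type*} [NormedAddCommGroup H] [InnerProductSpace ℝ H]
    (y : ℝ → H) (g : ℝ → ℝ) (M c : ℝ) (hM : 0 < M) (hc : 0 < c)
    (hg_nonneg : ∀ r, 0 ≤ g r)
    (hdom : ∀ r, 0 ≤ r → ‖y r‖ ^ 2 ≤ c * g r)
    (hosc : ∀ s t : ℝ, 0 ≤ s → s ≤ t →
      |‖y t‖ ^ 2 - ‖y s‖ ^ 2| ≤ M * Real.sqrt (∫ r in s..t, g r))
    (hint : IntegrableOn g (Ici 0)) :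
    Tendsto (fun t => ‖y t‖) atTop (nhds 0) := by
  have hgI : ∀ a b : ℝ, 0 ≤ a → 0 ≤ b → IntervalIntegrable g volume a b := by
    intro a b ha hb
    apply (hint.mono_set ?_).intervalIntegrable
    exact fun x hx => le_trans (le_min ha hb) hx.1
  have key : Tendsto (fun t => ‖y t‖ ^ 2) atTop (nhds 0) := by
    rw [Metric.tendsto_atTop]
    intro ε hε
    set η := min (ε / (2 * c)) ((ε / (2 * M)) ^ 2) with hηdef
    have hη0 : 0 < η := lt_min (by positivity) (by positivity)
    set L := ∫ r in Ioi (0:ℝ), g r with hLdef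
    have hIoi : IntegrableOn g (Ioi 0) := hint.mono_set Ioi_subset_Ici_self
    have htendsto : Tendsto (fun T => ∫ r in (0:ℝ)..T, g r) atTop (nhds L) :=
      intervalIntegral_tendsto_integral_Ioi 0 hIoi tendsto_id
    have hFle : ∀ T : ℝ, 0 ≤ T → (∫ r in (0:ℝ)..T, g r) ≤ L := by
      intro T hT
      rw [intervalIntegral.integral_of_le hT]
      apply setIntegral_mono_set hIoi
      · exact Eventually.of_forall fun r => hg_nonneg r
      · exact HasSubset.Subset.eventuallyLE Ioc_subset_Ioi_self
    obtain ⟨T, hT1, hT0⟩ :=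
      ((htendsto.eventually (lt_mem_nhds (by linarith : L - η/2 < L))).and
        (eventually_ge_atTop (0:ℝ))).exists
    have htail : ∀ s t : ℝ, T ≤ s → s ≤ t → (∫ r in s..t, g r) ≤ η/2 := by
      intro s t hs hst
      have hs0 : (0:ℝ) ≤ s := le_trans hT0 hs
      have ht0 : (0:ℝ) ≤ t := le_trans hs0 hst
      have h1 : (∫ r in (0:ℝ)..s, g r) + ∫ r in s..t, g r = ∫ r in (0:ℝ)..t, g r :=
        intervalIntegral.integral_add_adjacent_intervals (hgI 0 s le_rfl hs0) (hgI s t hs0 ht0)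
      have h2 : (∫ r in (0:ℝ)..T, g r) + ∫ r in T..s, g r = ∫ r in (0:ℝ)..s, g r :=
        intervalIntegral.integral_add_adjacent_intervals (hgI 0 T le_rfl hT0) (hgI T s hT0 hs0)
      have h3 : 0 ≤ ∫ r in T..s, g r :=
        intervalIntegral.integral_nonneg hs fun r _ => hg_nonneg r
      have h4 := hFle t ht0
      linarith
    obtain ⟨s, hTs, hs1, hgs⟩ : ∃ s, T ≤ s ∧ s ≤ T + 1 ∧ g s < η := by
      by_contra h
      push_neg at h
      have hmono : (∫ r in T..(T+1), (η:ℝ)) ≤ ∫ r in T..(T+1), g r := by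
        apply intervalIntegral.integral_mono_on (by linarith)
          intervalIntegrable_const (hgI T (T+1) hT0 (by linarith))
        intro x hx
        exact h x hx.1 hx.2
      rw [intervalIntegral.integral_const] at hmono
      have := htail T (T+1) le_rfl (by linarith)
      simp at hmono
      linarith
    refine ⟨s, fun t ht => ?_⟩
    have hs0 : (0:ℝ) ≤ s := le_trans hT0 hTs
    rw [Real.dist_eq, sub_zero, abs_of_nonneg (by positivity)]
    have h5 : ‖y t‖ ^ 2 - ‖y s‖ ^ 2 ≤ M * Real.sqrt (∫ r in s..t, g r) :=
      (abs_le.mp (hosc s t hs0 ht)).2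
    have h6 : Real.sqrt (∫ r in s..t, g r) ≤ Real.sqrt η :=
      Real.sqrt_le_sqrt (le_trans (htail s t hTs ht) (by linarith))
    have h7 : ‖y s‖ ^ 2 ≤ c * g s := hdom s hs0
    have hcη' : c * g s < ε / 2 := by
      have h8 : η ≤ ε / (2 * c) := min_le_left _ _
      have : c * g s < c * η := by nlinarith
      calc c * g s < c * η := this
        _ ≤ c * (ε / (2 * c)) := by nlinarith
        _ = ε / 2 := by field_simp
    have hMη : M * Real.sqrt η ≤ ε / 2 := by
      have h8 : η ≤ (ε / (2 * M)) ^ 2 := min_le_right _ _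
      have h9 : Real.sqrt η ≤ ε / (2 * M) := by
        calc Real.sqrt η ≤ Real.sqrt ((ε / (2 * M)) ^ 2) := Real.sqrt_le_sqrt h8
          _ = ε / (2 * M) := Real.sqrt_sq (by positivity)
      calc M * Real.sqrt η ≤ M * (ε / (2 * M)) := by nlinarith
        _ = ε / 2 := by field_simp
    have hsqrt_nonneg : 0 ≤ Real.sqrt (∫ r in s..t, g r) := Real.sqrt_nonneg _
    nlinarith [Real.sqrt_nonneg η]
  have h := (Real.continuous_sqrt.tendsto 0).comp key
  rw [Real.sqrt_zero] at h
  refine h.congr fun t => ?_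
  simp [Function.comp, Real.sqrt_sq (norm_nonneg _)]
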